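/- The mutual information function of the consistent-Gaussian LLR model, I(σ) = 2 − 2·E[log₂(1 + e^{−2L})] where L ~ N(σ²/√2·√2, σ²) conditioned on x = 1/√2 (i.e., L ~ N(σ², σ²) after scaling), is continuous and strictly monotonically increasing in σ on (0, ∞), with lim_{σ→0} I(σ) = 0 and lim_{σ→∞} I(σ) = 2. -/

import Mathlib

open Filter Set

/-- A priori mutual information of the consistent-Gaussian LLR model for
Gray-mapped QPSK (two BPSK components):
`I(σ) = 2 − 2·E[log₂(1 + e^{−2L})]` with `L ~ N(σ², σ²)` (the conditional
LLR distribution given `x = 1/√2`). -/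
noncomputable def exitMI (σ : ℝ) : ℝ :=
  2 - 2 * ∫ l : ℝ,
    (1 / (Real.sqrt (2 * Real.pi) * σ)) * Real.exp (-(l - σ^2)^2 / (2 * σ^2)) *
      Real.logb 2 (1 + Real.exp (-2 * l))

open Filter Set MeasureTheory Real

noncomputable section

namespace ExitAux

/-! ### Basic functions -/

/-- standard normal density -/
def phi (t : ℝ) : ℝ := (Real.sqrt (2 * Real.pi))⁻¹ * Real.exp (-t ^ 2 / 2)

/-- the integrand `log₂(1+e^{-2l})` -/
def g (l : ℝ) : ℝ := Real.logb 2 (1 + Real.exp (-2 * l))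

/-- derivative of `g` -/
def g' (l : ℝ) : ℝ := -(2 / Real.log 2) / (1 + Real.exp (2 * l))

lemma sqrt_two_pi_pos : 0 < Real.sqrt (2 * Real.pi) := Real.sqrt_pos.2 (by positivity)

lemma phi_pos (t : ℝ) : 0 < phi t := mul_pos (inv_pos.2 sqrt_two_pi_pos) (Real.exp_pos _)

lemma phi_cont : Continuous phi := by unfold phi; continuity

lemma phi_even (t : ℝ) : phi (-t) = phi t := by simp [phi]

lemma one_lt_arg (l : ℝ) : 1 < 1 + Real.exp (-2 * l) := by
  have := Real.exp_pos (-2 * l); linarith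

lemma log_two_pos : (0:ℝ) < Real.log 2 := Real.log_pos (by norm_num)

lemma g_pos (l : ℝ) : 0 < g l := Real.logb_pos (by norm_num) (one_lt_arg l)

lemma g_le (l : ℝ) : g l ≤ 1 + (2 / Real.log 2) * |l| := by
  have h1 : 1 + Real.exp (-2 * l) ≤ 2 * Real.exp (2 * |l|) := by
    have ha : Real.exp (-2 * l) ≤ Real.exp (2 * |l|) := by
      apply Real.exp_le_exp.2
      have := neg_abs_le l; nlinarith [abs_nonneg l]
    have hb : (1:ℝ) ≤ Real.exp (2 * |l|) := by
      apply Real.one_le_exp; positivity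
    linarith
  have h2 : g l ≤ Real.logb 2 (2 * Real.exp (2 * |l|)) :=
    Real.logb_le_logb_of_le (by norm_num) (lt_trans one_pos (one_lt_arg l)) h1
  refine h2.trans (le_of_eq ?_)
  rw [Real.logb, Real.log_mul (by norm_num) (Real.exp_ne_zero _), Real.log_exp]
  field_simp

lemma hasDerivAt_g (l : ℝ) : HasDerivAt g (g' l) l := by
  have harg : HasDerivAt (fun x : ℝ => 1 + Real.exp (-2 * x))
      (Real.exp (-2 * l) * (-2)) l := by
    have h1 : HasDerivAt (fun x : ℝ => -2 * x) (-2) l := by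
      simpa using (hasDerivAt_id l).const_mul (-2)
    simpa using (h1.exp.const_add 1)
  have hpos : (0:ℝ) < 1 + Real.exp (-2 * l) := lt_trans one_pos (one_lt_arg l)
  have hlog := (Real.hasDerivAt_log hpos.ne').comp l harg
  have hg : HasDerivAt g
      (((1 + Real.exp (-2 * l))⁻¹ * (Real.exp (-2 * l) * (-2))) / Real.log 2) l := by
    unfold g
    simp only [Real.logb]
    exact hlog.div_const _
  convert hg using 1
  unfold g'
  have hE : Real.exp (-2 * l) = (Real.exp (2 * l))⁻¹ := by
    rw [← Real.exp_neg]; norm_num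
  rw [hE]
  have h2 : Real.exp (2*l) ≠ 0 := (Real.exp_pos _).ne'
  have h3 : (0:ℝ) < 1 + (Real.exp (2*l))⁻¹ := by positivity
  have h4 : (0:ℝ) < 1 + Real.exp (2*l) := by positivity
  field_simp
  ring

lemma g'_neg (l : ℝ) : g' l < 0 := by
  unfold g'
  apply div_neg_of_neg_of_pos
  · have := log_two_pos
    exact neg_lt_zero.mpr (by positivity)
  · positivity

lemma abs_g'_le (l : ℝ) : |g' l| ≤ 2 / Real.log 2 := by
  unfold g'
  have h1 : (0:ℝ) < 1 + Real.exp (2 * l) := by positivity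
  have h2 : (0:ℝ) < 2 / Real.log 2 := by have := log_two_pos; positivity
  rw [abs_div, abs_neg, abs_of_pos h2, abs_of_pos h1]
  rw [div_le_iff₀ h1]
  nlinarith [Real.exp_pos (2*l)]

lemma g_cont : Continuous g :=
  continuous_iff_continuousAt.2 fun l => (hasDerivAt_g l).continuousAt

lemma g'_cont : Continuous g' := by
  unfold g'
  apply Continuous.div continuous_const (by continuity)
  intro x; positivity

lemma g_anti : ∀ ⦃a b : ℝ⦄, a ≤ b → g b ≤ g a := by
  intro a b hab
  unfold g
  apply Real.logb_le_logb_of_le (by norm_num) (lt_trans one_pos (one_lt_arg b))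
  have : Real.exp (-2*b) ≤ Real.exp (-2*a) := Real.exp_le_exp.2 (by linarith)
  linarith

lemma g_zero : g 0 = 1 := by unfold g; norm_num

lemma g_tendsto_zero : Tendsto g atTop (nhds 0) := by
  have h1 : Tendsto (fun l : ℝ => 1 + Real.exp (-2 * l)) atTop (nhds 1) := by
    have : Tendsto (fun l : ℝ => -2 * l) atTop atBot := by
      apply Tendsto.const_mul_atTop_of_neg (by norm_num) tendsto_id
    simpa using (Real.tendsto_exp_atBot.comp this).const_add 1
  have h2 : ContinuousAt (Real.logb 2) 1 := Real.continuousAt_logb (by norm_num)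
  have h3 := h2.tendsto.comp h1
  simp only [Real.logb_one] at h3
  exact Tendsto.congr (fun l => rfl) h3

/-! ### Integrability toolbox -/

lemma exp_eq (t : ℝ) : Real.exp (-t ^ 2 / 2) = Real.exp (-(1/2 : ℝ) * t ^ 2) := by ring_nf

lemma integrable_exp_gauss : Integrable (fun t : ℝ => Real.exp (-t ^ 2 / 2)) := by
  have := integrable_exp_neg_mul_sq (b := 1/2) (by norm_num)
  exact this.congr (Eventually.of_forall fun t => (exp_eq t).symm)

lemma integrable_phi : Integrable phi := integrable_exp_gauss.const_mul _

lemma integral_phi : ∫ t : ℝ, phi t = 1 := by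
  have h : ∫ t : ℝ, Real.exp (-t ^ 2 / 2) = Real.sqrt (2 * Real.pi) := by
    rw [show (fun t : ℝ => Real.exp (-t ^ 2 / 2))
        = fun t : ℝ => Real.exp (-(1/2:ℝ) * t ^ 2) from funext exp_eq]
    rw [integral_gaussian]
    rw [show Real.pi / (1/2) = 2 * Real.pi by ring]
  unfold phi
  rw [integral_const_mul, h]
  field_simp

lemma integrable_abs_mul_gauss : Integrable (fun t : ℝ => |t| * Real.exp (-t ^ 2 / 2)) := by
  have h := integrable_rpow_mul_exp_neg_mul_sq (b := 1/2) (by norm_num) (s := 1) (by norm_num)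
  have h2 : Integrable (fun t : ℝ => t * Real.exp (-t^2/2)) := by
    refine h.congr (Eventually.of_forall fun t => ?_)
    simp only [Real.rpow_one, ← exp_eq]
  simpa [abs_mul, abs_of_nonneg (Real.exp_pos _).le] using h2.abs

lemma integrable_sq_mul_gauss : Integrable (fun t : ℝ => t ^ 2 * Real.exp (-t ^ 2 / 2)) := by
  have h := integrable_rpow_mul_exp_neg_mul_sq (b := 1/2) (by norm_num) (s := 2) (by norm_num)
  refine h.congr (Eventually.of_forall fun t => ?_)
  have h2 : t ^ (2:ℝ) = t ^ 2 := by
    rw [← Real.rpow_natCast t 2]; norm_num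
  simp only [h2, ← exp_eq]

/-- master integrable bound -/
lemma integrable_phi_poly (c₀ c₁ c₂ : ℝ) :
    Integrable (fun t : ℝ => phi t * (c₀ + c₁ * |t| + c₂ * t ^ 2)) := by
  have h : (fun t : ℝ => phi t * (c₀ + c₁ * |t| + c₂ * t ^ 2)) =
      fun t : ℝ => (c₀ * (Real.sqrt (2 * Real.pi))⁻¹) * Real.exp (-t^2/2)
        + ((c₁ * (Real.sqrt (2 * Real.pi))⁻¹) * (|t| * Real.exp (-t^2/2))
        + (c₂ * (Real.sqrt (2 * Real.pi))⁻¹) * (t^2 * Real.exp (-t^2/2))) := by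
    funext t; unfold phi; ring
  rw [h]
  exact (integrable_exp_gauss.const_mul _).add
    ((integrable_abs_mul_gauss.const_mul _).add (integrable_sq_mul_gauss.const_mul _))

/-! ### The reparametrized integral -/

def J (σ : ℝ) : ℝ := ∫ t : ℝ, phi t * g (σ ^ 2 + σ * t)

def D (σ : ℝ) : ℝ := ∫ t : ℝ, phi t * (g' (σ ^ 2 + σ * t) * (2 * σ + t))

lemma contJ (σ : ℝ) : Continuous (fun t : ℝ => phi t * g (σ ^ 2 + σ * t)) :=
  phi_cont.mul (g_cont.comp (by continuity))

lemma contD (σ : ℝ) : Continuous (fun t : ℝ => phi t * (g' (σ ^ 2 + σ * t) * (2 * σ + t))) :=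
  phi_cont.mul ((g'_cont.comp (by continuity)).mul (by continuity))

lemma integrable_J_integrand {σ : ℝ} (hσ : 0 < σ) :
    Integrable (fun t : ℝ => phi t * g (σ ^ 2 + σ * t)) := by
  refine (integrable_phi_poly (1 + (2/Real.log 2)*σ^2) ((2/Real.log 2)*σ) 0).mono'
    (contJ σ).aestronglyMeasurable (Eventually.of_forall fun t => ?_)
  have hg0 := (g_pos (σ^2+σ*t)).le
  have hphi := (phi_pos t).le
  rw [Real.norm_eq_abs, abs_of_nonneg (mul_nonneg hphi hg0)]
  have hb := g_le (σ^2+σ*t)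
  have habs : |σ^2 + σ*t| ≤ σ^2 + σ*|t| := by
    calc |σ^2 + σ*t| ≤ |σ^2| + |σ*t| := abs_add_le _ _
    _ = σ^2 + σ*|t| := by rw [abs_of_nonneg (sq_nonneg σ), abs_mul, abs_of_pos hσ]
  have hL : (0:ℝ) ≤ 2 / Real.log 2 := by have := log_two_pos; positivity
  have h1 : g (σ^2+σ*t) ≤ (1 + (2/Real.log 2)*σ^2) + ((2/Real.log 2)*σ)*|t| := by
    have := mul_le_mul_of_nonneg_left habs hL
    nlinarith
  calc phi t * g (σ^2+σ*t)
      ≤ phi t * ((1 + (2/Real.log 2)*σ^2) + ((2/Real.log 2)*σ)*|t|) :=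
        mul_le_mul_of_nonneg_left h1 hphi
    _ = phi t * ((1 + (2/Real.log 2)*σ^2) + ((2/Real.log 2)*σ)*|t| + 0*t^2) := by ring

/-! ### Change of variables -/

lemma integral_shift_scale (F : ℝ → ℝ) {σ : ℝ} (hσ : 0 < σ) :
    ∫ l : ℝ, F l = σ * ∫ t : ℝ, F (σ * t + σ ^ 2) := by
  have h2 : (∫ t : ℝ, F (σ * t + σ ^ 2)) = σ⁻¹ * ∫ x : ℝ, F x := by
    have h1 := Measure.integral_comp_mul_left (fun x : ℝ => F (x + σ ^ 2)) σ
    rw [integral_add_right_eq_self (fun x : ℝ => F x) (σ ^ 2)] at h1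
    rw [h1, smul_eq_mul, abs_of_pos (inv_pos.2 hσ)]
  rw [h2]
  field_simp

end ExitAux

end

namespace ExitAux

lemma exitMI_eq {σ : ℝ} (hσ : 0 < σ) : exitMI σ = 2 - 2 * J σ := by
  unfold exitMI J
  rw [integral_shift_scale (fun l : ℝ =>
    (1 / (Real.sqrt (2 * Real.pi) * σ)) * Real.exp (-(l - σ^2)^2 / (2 * σ^2)) *
      Real.logb 2 (1 + Real.exp (-2 * l))) hσ]
  congr 1
  rw [← integral_const_mul]
  have hfun : (fun t : ℝ => σ * ((1 / (Real.sqrt (2 * Real.pi) * σ)) *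
      Real.exp (-((σ * t + σ^2) - σ^2)^2 / (2 * σ^2)) *
      Real.logb 2 (1 + Real.exp (-2 * (σ * t + σ^2)))))
    = fun t : ℝ => phi t * g (σ ^ 2 + σ * t) := by
    funext t
    have hσ2 : σ^2 ≠ 0 := by positivity
    have e1 : -((σ * t + σ^2) - σ^2)^2 / (2 * σ^2) = -t^2/2 := by
      field_simp; ring
    have e2 : -2 * (σ * t + σ^2) = -2 * (σ^2 + σ * t) := by ring
    rw [e1, e2]
    unfold phi g
    have h1 : Real.sqrt (2 * Real.pi) ≠ 0 := sqrt_two_pi_pos.ne'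
    field_simp
  rw [hfun]

end ExitAux

namespace ExitAux

lemma hasDerivAt_J {σ₀ : ℝ} (h : 0 < σ₀) : HasDerivAt J (D σ₀) σ₀ := by
  have key := hasDerivAt_integral_of_dominated_loc_of_deriv_le (μ := (volume : Measure ℝ))
    (F := fun (σ : ℝ) (t : ℝ) => phi t * g (σ ^ 2 + σ * t))
    (F' := fun (σ : ℝ) (t : ℝ) => phi t * (g' (σ ^ 2 + σ * t) * (2 * σ + t)))
    (x₀ := σ₀)
    (bound := fun t : ℝ =>
      phi t * ((2/Real.log 2) * (2*|σ₀|+2) + (2/Real.log 2)*|t| + 0*t^2))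
    (s := Metric.ball σ₀ 1) (Metric.ball_mem_nhds σ₀ one_pos)
    (Eventually.of_forall fun σ => (contJ σ).aestronglyMeasurable)
    (integrable_J_integrand h)
    (contD σ₀).aestronglyMeasurable
    ?_ (integrable_phi_poly _ _ _) ?_
  · exact key.2
  · refine Eventually.of_forall fun t => fun σ hσ => ?_
    have hd : |σ - σ₀| < 1 := by
      rw [Metric.mem_ball, Real.dist_eq] at hσ; exact hσ
    have hσle : |σ| ≤ |σ₀| + 1 := by
      have := abs_sub_abs_le_abs_sub σ σ₀; linarith
    have hphi := (phi_pos t).le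
    have h1 := abs_g'_le (σ^2 + σ*t)
    have h2 : |2*σ+t| ≤ 2*|σ₀| + 2 + |t| := by
      calc |2*σ+t| ≤ |2*σ| + |t| := abs_add_le _ _
        _ = 2*|σ| + |t| := by rw [abs_mul]; norm_num
        _ ≤ 2*|σ₀| + 2 + |t| := by linarith
    have hL : (0:ℝ) ≤ 2 / Real.log 2 := by have := log_two_pos; positivity
    rw [Real.norm_eq_abs, abs_mul, abs_of_pos (phi_pos t), abs_mul]
    have step1 : |g' (σ^2+σ*t)| * |2*σ+t| ≤ (2/Real.log 2) * (2*|σ₀| + 2 + |t|) := by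
      have := mul_le_mul h1 h2 (abs_nonneg _) hL
      linarith
    calc phi t * (|g' (σ^2+σ*t)| * |2*σ+t|)
        ≤ phi t * ((2/Real.log 2) * (2*|σ₀| + 2 + |t|)) :=
          mul_le_mul_of_nonneg_left step1 hphi
      _ = phi t * ((2/Real.log 2) * (2*|σ₀|+2) + (2/Real.log 2)*|t| + 0*t^2) := by ring
  · refine Eventually.of_forall fun t => fun σ _ => ?_
    have hi : HasDerivAt (fun σ : ℝ => σ ^ 2 + σ * t) (2 * σ + t) σ := by
      have h1 : HasDerivAt (fun σ : ℝ => σ ^ 2 + σ * t) _ σ := (hasDerivAt_pow 2 σ).add ((hasDerivAt_id σ).mul_const t)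
      simpa using h1
    have h2 := ((hasDerivAt_g (σ ^ 2 + σ * t)).comp σ hi).const_mul (phi t)
    exact h2

/-! ### Negativity of the derivative via symmetrization -/

noncomputable def k (σ u : ℝ) : ℝ := phi (u - 2*σ) * (g' (σ*u - σ^2) * u)

lemma k_cont (σ : ℝ) : Continuous (k σ) := by
  unfold k
  exact (phi_cont.comp (by continuity)).mul ((g'_cont.comp (by continuity)).mul continuous_id)

lemma D_eq (σ : ℝ) : D σ = ∫ u : ℝ, k σ u := by
  unfold D
  have hfun : (fun t : ℝ => phi t * (g' (σ ^ 2 + σ * t) * (2 * σ + t)))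
      = fun t : ℝ => k σ (t + 2*σ) := by
    funext t
    unfold k
    rw [show t + 2*σ - 2*σ = t from by ring,
        show σ*(t+2*σ) - σ^2 = σ^2 + σ*t from by ring]
    ring
  rw [hfun]
  exact integral_add_right_eq_self (k σ) (2*σ)

lemma integrable_k {σ : ℝ} (hσ : 0 < σ) : Integrable (k σ) := by
  have base := integrable_phi_poly ((2/Real.log 2)*(2*σ)) (2/Real.log 2) 0
  have shifted := base.comp_sub_right (2*σ)
  refine shifted.mono' (k_cont σ).aestronglyMeasurable (Eventually.of_forall fun u => ?_)
  have hp := phi_pos (u - 2*σ)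
  have h1 := abs_g'_le (σ*u - σ^2)
  have hL : (0:ℝ) ≤ 2 / Real.log 2 := by have := log_two_pos; positivity
  have habs : |u| ≤ |u - 2*σ| + 2*σ := by
    have h0 : u = (u - 2*σ) + 2*σ := by ring
    calc |u| = |(u - 2*σ) + 2*σ| := by rw [← h0]
      _ ≤ |u - 2*σ| + |2*σ| := abs_add_le _ _
      _ = |u - 2*σ| + 2*σ := by rw [abs_of_pos (show (0:ℝ) < 2*σ by linarith)]
  rw [Real.norm_eq_abs]
  unfold k
  rw [abs_mul, abs_of_pos hp, abs_mul]
  have step1 : |g' (σ*u - σ^2)| * |u| ≤ (2/Real.log 2) * (|u - 2*σ| + 2*σ) := by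
    have := mul_le_mul h1 habs (abs_nonneg _) hL
    linarith
  calc phi (u - 2*σ) * (|g' (σ*u - σ^2)| * |u|)
      ≤ phi (u - 2*σ) * ((2/Real.log 2) * (|u - 2*σ| + 2*σ)) :=
        mul_le_mul_of_nonneg_left step1 hp.le
    _ = phi (u - 2*σ) * ((2/Real.log 2)*(2*σ) + (2/Real.log 2)*|u - 2*σ| + 0*(u - 2*σ)^2) := by
        ring

lemma key_neg {σ u : ℝ} (hσ : 0 < σ) (hu : 0 < u) : k σ u + k σ (-u) < 0 := by
  have hA : (0:ℝ) < 2 / Real.log 2 := by have := log_two_pos; positivity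
  have d1 : (0:ℝ) < 1 + Real.exp (2*(σ*u - σ^2)) := by positivity
  have d2 : (0:ℝ) < 1 + Real.exp (2*(σ*(-u) - σ^2)) := by positivity
  -- the main comparison
  have hE : phi (u+2*σ) * (1 + Real.exp (2*(σ*u - σ^2)))
      < phi (u-2*σ) * (1 + Real.exp (2*(σ*(-u) - σ^2))) := by
    unfold phi
    have hcross : Real.exp (-(u+2*σ)^2/2) * Real.exp (2*(σ*u - σ^2))
        = Real.exp (-(u-2*σ)^2/2) * Real.exp (2*(σ*(-u) - σ^2)) := by
      rw [← Real.exp_add, ← Real.exp_add]; congr 1; ring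
    have hmain : Real.exp (-(u+2*σ)^2/2) < Real.exp (-(u-2*σ)^2/2) := by
      apply Real.exp_lt_exp.2; nlinarith
    have hc : (0:ℝ) < (Real.sqrt (2*Real.pi))⁻¹ := inv_pos.2 sqrt_two_pi_pos
    nlinarith [Real.exp_pos (2*(σ*u - σ^2)), Real.exp_pos (2*(σ*(-u) - σ^2))]
  have hgl : phi (u-2*σ) * g' (σ*u - σ^2) < phi (u+2*σ) * g' (σ*(-u) - σ^2) := by
    unfold g'
    have e1 : phi (u-2*σ) * (-(2 / Real.log 2) / (1 + Real.exp (2*(σ*u - σ^2))))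
        = (-(2 / Real.log 2) * phi (u-2*σ)) / (1 + Real.exp (2*(σ*u - σ^2))) := by ring
    have e2 : phi (u+2*σ) * (-(2 / Real.log 2) / (1 + Real.exp (2*(σ*(-u) - σ^2))))
        = (-(2 / Real.log 2) * phi (u+2*σ)) / (1 + Real.exp (2*(σ*(-u) - σ^2))) := by ring
    rw [e1, e2, div_lt_div_iff₀ d1 d2]
    nlinarith [hE, hA]
  have hk : k σ u + k σ (-u)
      = u * (phi (u-2*σ) * g' (σ*u - σ^2) - phi (u+2*σ) * g' (σ*(-u) - σ^2)) := by
    unfold k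
    rw [show -u - 2*σ = -(u + 2*σ) from by ring, phi_even]
    ring
  rw [hk]
  exact mul_neg_of_pos_of_neg hu (by linarith)

lemma S_nonpos {σ : ℝ} (hσ : 0 < σ) (u : ℝ) : k σ u + k σ (-u) ≤ 0 := by
  rcases lt_trichotomy u 0 with h | h | h
  · have h2 := key_neg hσ (neg_pos.2 h)
    rw [neg_neg] at h2
    linarith
  · subst h; simp [k]
  · exact (key_neg hσ h).le

lemma D_neg {σ : ℝ} (hσ : 0 < σ) : D σ < 0 := by
  have hk_int := integrable_k hσ
  have hkneg : Integrable (fun u : ℝ => k σ (-u)) := hk_int.comp_neg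
  have hS_int : Integrable (fun u : ℝ => k σ u + k σ (-u)) := hk_int.add hkneg
  have hneg_int : Integrable (fun u : ℝ => -(k σ u + k σ (-u))) := hS_int.neg
  have hpos : 0 < ∫ u : ℝ, -(k σ u + k σ (-u)) := by
    rw [integral_pos_iff_support_of_nonneg_ae
      (Eventually.of_forall fun u => neg_nonneg.2 (S_nonpos hσ u)) hneg_int]
    refine lt_of_lt_of_le ?_ (measure_mono (fun u (hu : u ∈ Ioi (0:ℝ)) => ?_))
    · show (0:ENNReal) < volume (Ioi (0:ℝ))
      simp [Real.volume_Ioi]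
    · have := key_neg hσ (mem_Ioi.1 hu)
      simp only [Function.mem_support]
      intro hcontra
      rw [neg_eq_zero] at hcontra
      linarith [this, hcontra.ge]
  have h1 : ∫ u : ℝ, k σ (-u) = ∫ u : ℝ, k σ u := integral_neg_eq_self (k σ) volume
  have h2 : ∫ u : ℝ, (k σ u + k σ (-u)) = 2 * ∫ u : ℝ, k σ u := by
    rw [integral_add hk_int hkneg, h1]; ring
  have h3 : ∫ u : ℝ, -(k σ u + k σ (-u)) = -(2 * ∫ u : ℝ, k σ u) := by
    rw [integral_neg, h2]
  rw [h3] at hpos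
  rw [D_eq σ]
  linarith

lemma hasDerivAt_exitMI {σ : ℝ} (hσ : 0 < σ) : HasDerivAt exitMI (-(2 * D σ)) σ := by
  have h1 : HasDerivAt (fun s : ℝ => 2 - 2 * J s) (-(2 * D σ)) σ :=
    ((hasDerivAt_J hσ).const_mul 2).const_sub 2
  have h2 : exitMI =ᶠ[nhds σ] (fun s : ℝ => 2 - 2 * J s) := by
    filter_upwards [IsOpen.mem_nhds isOpen_Ioi hσ] with s hs
    exact exitMI_eq hs
  exact h1.congr_of_eventuallyEq h2

end ExitAux

namespace ExitAux

lemma tendsto_J_zero : Tendsto J (nhdsWithin 0 (Set.Ioi (0:ℝ))) (nhds 1) := by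
  have h := tendsto_integral_filter_of_dominated_convergence (μ := (volume : Measure ℝ))
    (l := nhdsWithin (0:ℝ) (Set.Ioi (0:ℝ)))
    (F := fun (σ : ℝ) (t : ℝ) => phi t * g (σ ^ 2 + σ * t))
    (f := phi)
    (bound := fun t : ℝ => phi t * ((1 + 2/Real.log 2) + (2/Real.log 2)*|t| + 0*t^2))
    (Eventually.of_forall fun σ => (contJ σ).aestronglyMeasurable)
    ?_ (integrable_phi_poly _ _ _) ?_
  · unfold J
    rwa [integral_phi] at h
  · filter_upwards [Ioo_mem_nhdsGT_of_mem (left_mem_Ico.2 one_pos)] with σ hσ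
    refine Eventually.of_forall fun t => ?_
    have hσ0 : 0 < σ := hσ.1
    have hσ1 : σ ≤ 1 := hσ.2.le
    have hphi := (phi_pos t).le
    have hg0 := (g_pos (σ^2+σ*t)).le
    rw [Real.norm_eq_abs, abs_of_nonneg (mul_nonneg hphi hg0)]
    have hb := g_le (σ^2+σ*t)
    have hL : (0:ℝ) ≤ 2 / Real.log 2 := by have := log_two_pos; positivity
    have habs : |σ^2 + σ*t| ≤ 1 + |t| := by
      calc |σ^2 + σ*t| ≤ |σ^2| + |σ*t| := abs_add_le _ _
        _ = σ^2 + σ*|t| := by rw [abs_of_nonneg (sq_nonneg σ), abs_mul, abs_of_pos hσ0]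
        _ ≤ 1 + |t| := by nlinarith [abs_nonneg t]
    have h1 : g (σ^2+σ*t) ≤ (1 + 2/Real.log 2) + (2/Real.log 2)*|t| := by
      have := mul_le_mul_of_nonneg_left habs hL
      nlinarith
    calc phi t * g (σ^2+σ*t)
        ≤ phi t * ((1 + 2/Real.log 2) + (2/Real.log 2)*|t|) :=
          mul_le_mul_of_nonneg_left h1 hphi
      _ = phi t * ((1 + 2/Real.log 2) + (2/Real.log 2)*|t| + 0*t^2) := by ring
  · refine Eventually.of_forall fun t => ?_
    have hc : Continuous (fun σ : ℝ => phi t * g (σ ^ 2 + σ * t)) :=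
      continuous_const.mul (g_cont.comp (by continuity))
    have h2 := (hc.tendsto 0).mono_left (nhdsWithin_le_nhds (s := Set.Ioi (0:ℝ)))
    simpa [g_zero] using h2

lemma tendsto_J_atTop : Tendsto J atTop (nhds 0) := by
  have h := tendsto_integral_filter_of_dominated_convergence (μ := (volume : Measure ℝ))
    (l := (atTop : Filter ℝ))
    (F := fun (σ : ℝ) (t : ℝ) => phi t * g (σ ^ 2 + σ * t))
    (f := fun _ : ℝ => (0:ℝ))
    (bound := fun t : ℝ => phi t * (1 + 0*|t| + ((2/Real.log 2)/4)*t^2))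
    (Eventually.of_forall fun σ => (contJ σ).aestronglyMeasurable)
    ?_ (integrable_phi_poly _ _ _) ?_
  · unfold J
    rwa [integral_zero] at h
  · filter_upwards [eventually_gt_atTop (0:ℝ)] with σ hσ0
    refine Eventually.of_forall fun t => ?_
    have hphi := (phi_pos t).le
    have hg0 := (g_pos (σ^2+σ*t)).le
    rw [Real.norm_eq_abs, abs_of_nonneg (mul_nonneg hphi hg0)]
    have hge : -(t^2/4) ≤ σ^2 + σ*t := by nlinarith [sq_nonneg (σ + t/2)]
    have h1 : g (σ^2+σ*t) ≤ g (-(t^2/4)) := g_anti hge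
    have h2 : g (-(t^2/4)) ≤ 1 + (2/Real.log 2) * (t^2/4) := by
      have := g_le (-(t^2/4))
      rwa [abs_neg, abs_of_nonneg (by positivity : (0:ℝ) ≤ t^2/4)] at this
    have h3 : g (σ^2+σ*t) ≤ 1 + 0*|t| + ((2/Real.log 2)/4)*t^2 := by
      calc g (σ^2+σ*t) ≤ 1 + (2/Real.log 2) * (t^2/4) := h1.trans h2
        _ = 1 + 0*|t| + ((2/Real.log 2)/4)*t^2 := by ring
    exact mul_le_mul_of_nonneg_left h3 hphi
  · refine Eventually.of_forall fun t => ?_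
    have hin : Tendsto (fun σ : ℝ => σ ^ 2 + σ * t) atTop atTop := by
      have h1 : Tendsto (fun σ : ℝ => σ * (σ + t)) atTop atTop :=
        tendsto_id.atTop_mul_atTop₀ (tendsto_atTop_add_const_right _ t tendsto_id)
      refine h1.congr fun σ => by ring
    have h2 := (g_tendsto_zero.comp hin).const_mul (phi t)
    simpa using h2

end ExitAux

open ExitAux in
/-- The EXIT-chart mutual information function is continuous and strictly
increasing on `(0, ∞)`, with limit `0` as `σ → 0⁺` and limit `2` (bits per QPSK
symbol) as `σ → ∞`. -/
theorem exitMI_monotone_limits :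
    ContinuousOn exitMI (Set.Ioi (0 : ℝ)) ∧
    StrictMonoOn exitMI (Set.Ioi (0 : ℝ)) ∧
    Tendsto exitMI (nhdsWithin 0 (Set.Ioi (0 : ℝ))) (nhds 0) ∧
    Tendsto exitMI atTop (nhds 2) := by
  have hcont : ContinuousOn exitMI (Set.Ioi (0 : ℝ)) := fun x hx =>
    (hasDerivAt_exitMI (mem_Ioi.1 hx)).continuousAt.continuousWithinAt
  refine ⟨hcont, ?_, ?_, ?_⟩
  · refine strictMonoOn_of_deriv_pos (convex_Ioi 0) hcont fun x hx => ?_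
    rw [interior_Ioi] at hx
    have hx0 := mem_Ioi.1 hx
    rw [(hasDerivAt_exitMI hx0).deriv]
    have := D_neg hx0
    linarith
  · have h1 : Tendsto (fun σ : ℝ => 2 - 2 * J σ) (nhdsWithin 0 (Set.Ioi (0:ℝ)))
        (nhds (2 - 2 * 1)) :=
      tendsto_const_nhds.sub (tendsto_J_zero.const_mul 2)
    have h2 : (fun σ : ℝ => 2 - 2 * J σ) =ᶠ[nhdsWithin 0 (Set.Ioi (0:ℝ))] exitMI := by
      filter_upwards [self_mem_nhdsWithin] with σ hσ
      exact (exitMI_eq (mem_Ioi.1 hσ)).symm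
    have h3 := h1.congr' h2
    norm_num at h3
    exact h3
  · have h1 : Tendsto (fun σ : ℝ => 2 - 2 * J σ) atTop (nhds (2 - 2 * 0)) :=
      tendsto_const_nhds.sub (tendsto_J_atTop.const_mul 2)
    have h2 : (fun σ : ℝ => 2 - 2 * J σ) =ᶠ[atTop] exitMI := by
      filter_upwards [eventually_gt_atTop (0:ℝ)] with σ hσ
      exact (exitMI_eq hσ).symm
    have h3 := h1.congr' h2
    norm_num at h3
    exact h3
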